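/- Let α > 0 and let a < x be real numbers. Then the left-sided Riemann–Liouville fractional integral of order α of the Gaussian function τ ↦ exp(-τ²/2) satisfies (1/Γ(α)) ∫_a^x (x - τ)^(α-1) exp(-τ²/2) dτ = (x - a)^α · Σ_{n=0}^{∞} ((-1)^n (2n)! / (2^n · n!)) · ( Σ_{k=0}^{2n} a^(2n-k) (x - a)^k / ((2n - k)! · Γ(α + k + 1)) ), where the outer series converges. -/

import Mathlib

open MeasureTheory Real
open intervalIntegral

lemma beta01 (α : ℝ) (hα : 0 < α) (k : ℕ) :
    ∫ t in (0:ℝ)..1, t ^ k * (1 - t) ^ (α - 1) =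
      (k.factorial : ℝ) * Real.Gamma α / Real.Gamma (α + k + 1) := by
  have hb := Complex.Gamma_mul_Gamma_eq_betaIntegral (s := (k : ℂ) + 1) (t := (α : ℂ))
    (by simp [Complex.add_re]; positivity) (by simpa using hα)
  have hre : (Complex.betaIntegral ((k : ℂ) + 1) (α : ℂ)) =
      ((∫ t in (0:ℝ)..1, t ^ k * (1 - t) ^ (α - 1) : ℝ) : ℂ) := by
    rw [Complex.betaIntegral, ← intervalIntegral.integral_ofReal]
    refine intervalIntegral.integral_congr fun t ht => ?_
    rw [Set.uIcc_of_le (by norm_num : (0:ℝ) ≤ 1)] at ht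
    rw [add_sub_cancel_right, Complex.cpow_natCast]
    rw [show ((1:ℂ) - t) = ((1 - t : ℝ) : ℂ) by push_cast; ring]
    rw [show ((α:ℂ) - 1) = ((α - 1 : ℝ) : ℂ) by push_cast; ring,
      ← Complex.ofReal_cpow (by linarith [ht.2]), ← Complex.ofReal_pow,
      ← Complex.ofReal_mul]
  have hG1 : Complex.Gamma ((k:ℂ) + 1) = (k.factorial : ℂ) := by
    exact_mod_cast Complex.Gamma_nat_eq_factorial k
  have hG2 : Complex.Gamma ((k:ℂ) + 1 + (α:ℂ)) = ((Real.Gamma (α + k + 1) : ℝ) : ℂ) := by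
    rw [show ((k:ℂ) + 1 + (α:ℂ)) = ((α + k + 1 : ℝ) : ℂ) by push_cast; ring,
      Complex.Gamma_ofReal]
  have hGne : Real.Gamma (α + k + 1) ≠ 0 := by
    have : (0:ℝ) < α + k + 1 := by positivity
    exact (Real.Gamma_pos_of_pos this).ne'
  rw [hre, hG1, hG2, Complex.Gamma_ofReal] at hb
  have := congrArg Complex.re hb
  simp only [← Complex.ofReal_mul, Complex.ofReal_re] at this
  field_simp at this ⊢
  rw [show ((k.factorial : ℂ) * ((Real.Gamma α : ℝ) : ℂ)).re = (k.factorial : ℝ) * Real.Gamma α by simp] at this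
  linarith [this]

lemma integ1 (α c : ℝ) (hα : 0 < α) :
    IntervalIntegrable (fun s => (c - s) ^ (α - 1)) volume 0 c := by
  have h := (intervalIntegrable_rpow' (a := c) (b := 0)
    (by linarith : (-1:ℝ) < α - 1)).comp_sub_left c
  simpa using h

lemma integ2 (α c : ℝ) (hα : 0 < α) (k : ℕ) :
    IntervalIntegrable (fun s => s ^ k * (c - s) ^ (α - 1)) volume 0 c :=
  (integ1 α c hα).continuousOn_mul (by fun_prop)

lemma beta_scaled (α : ℝ) (hα : 0 < α) (k : ℕ) (c : ℝ) (hc : 0 < c) :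
    ∫ s in (0:ℝ)..c, s ^ k * (c - s) ^ (α - 1) =
      c ^ (α + k) * ((k.factorial : ℝ) * Real.Gamma α / Real.Gamma (α + k + 1)) := by
  have h := integral_comp_mul_left (f := fun s => s ^ k * (c - s) ^ (α - 1))
    (a := (0:ℝ)) (b := 1) (c := c) hc.ne'
  simp only [mul_zero, mul_one] at h
  have h2 : ∫ t in (0:ℝ)..1, (c * t) ^ k * (c - c * t) ^ (α - 1) =
      (c ^ k * c ^ (α - 1)) * ∫ t in (0:ℝ)..1, t ^ k * (1 - t) ^ (α - 1) := by
    rw [← intervalIntegral.integral_const_mul]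
    refine intervalIntegral.integral_congr fun t ht => ?_
    rw [Set.uIcc_of_le (by norm_num : (0:ℝ) ≤ 1)] at ht
    rw [mul_pow, show c - c * t = c * (1 - t) by ring,
      Real.mul_rpow hc.le (by linarith [ht.2])]
    ring
  rw [h2, beta01 α hα k] at h
  have := congrArg (fun z => c * z) h
  simp only [smul_eq_mul, ← mul_assoc, mul_inv_cancel₀ hc.ne', one_mul] at this
  rw [← this]
  rw [show c ^ (α + k) = c * (c ^ k * c ^ (α - 1)) by
    rw [← Real.rpow_natCast c k, ← Real.rpow_add hc,
      show α + (k:ℝ) = 1 + ((k:ℝ) + (α - 1)) by ring, Real.rpow_add hc,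
      Real.rpow_one]]
  ring

lemma int_n (α : ℝ) (hα : 0 < α) (a c : ℝ) (hc : 0 < c) (n : ℕ) :
    ∫ s in (0:ℝ)..c, (c - s) ^ (α - 1) * (s + a) ^ (2 * n) =
      Real.Gamma α * c ^ α * (((2 * n).factorial : ℝ) *
        ∑ k ∈ Finset.range (2 * n + 1),
          a ^ (2 * n - k) * c ^ k / ((2 * n - k).factorial * Real.Gamma (α + k + 1))) := by
  have h1 : ∀ s : ℝ, (c - s) ^ (α - 1) * (s + a) ^ (2 * n) =
      ∑ k ∈ Finset.range (2 * n + 1),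
        (((2 * n).choose k : ℝ) * a ^ (2 * n - k)) * (s ^ k * (c - s) ^ (α - 1)) := by
    intro s
    rw [add_pow, Finset.mul_sum]
    exact Finset.sum_congr rfl fun k _ => by ring
  simp_rw [h1]
  rw [intervalIntegral.integral_finset_sum
    (fun k _ => ((integ2 α c hα k).const_mul _))]
  simp_rw [intervalIntegral.integral_const_mul, beta_scaled α hα _ c hc]
  have hterm : ∀ k ∈ Finset.range (2 * n + 1),
      (((2 * n).choose k : ℝ) * a ^ (2 * n - k)) *
        (c ^ (α + k) * ((k.factorial : ℝ) * Real.Gamma α / Real.Gamma (α + k + 1))) =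
      (Real.Gamma α * c ^ α * ((2 * n).factorial : ℝ)) *
        (a ^ (2 * n - k) * c ^ k / ((2 * n - k).factorial * Real.Gamma (α + k + 1))) := by
    intro k hk
    have hk' : k ≤ 2 * n := Nat.lt_succ_iff.mp (Finset.mem_range.mp hk)
    have hC : (((2 * n).choose k : ℝ)) * k.factorial * (2 * n - k).factorial =
        ((2 * n).factorial : ℝ) := by
      exact_mod_cast congrArg (Nat.cast : ℕ → ℝ)
        (Nat.choose_mul_factorial_mul_factorial hk')
    have hG : Real.Gamma (α + k + 1) ≠ 0 := by
      have : (0:ℝ) < α + k + 1 := by positivity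
      exact (Real.Gamma_pos_of_pos this).ne'
    have hF : ((2 * n - k).factorial : ℝ) ≠ 0 := Nat.cast_ne_zero.mpr (2 * n - k).factorial_ne_zero
    rw [Real.rpow_add hc, Real.rpow_natCast]
    field_simp
    linear_combination a ^ (2 * n - k) * hC
  rw [Finset.sum_congr rfl hterm, ← Finset.mul_sum]
  ring

theorem rl_integral_gaussian (α : ℝ) (hα : 0 < α) (a x : ℝ) (hax : a < x) :
    Summable (fun n : ℕ =>
      ((-1 : ℝ) ^ n * (2 * n).factorial / (2 ^ n * n.factorial)) *
        ∑ k ∈ Finset.range (2 * n + 1),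
          a ^ (2 * n - k) * (x - a) ^ k / ((2 * n - k).factorial * Real.Gamma (α + k + 1))) ∧
    (1 / Real.Gamma α) * ∫ τ in a..x, (x - τ) ^ (α - 1) * Real.exp (-τ ^ 2 / 2) =
      (x - a) ^ α *
        ∑' n : ℕ,
          ((-1 : ℝ) ^ n * (2 * n).factorial / (2 ^ n * n.factorial)) *
            ∑ k ∈ Finset.range (2 * n + 1),
              a ^ (2 * n - k) * (x - a) ^ k /
                ((2 * n - k).factorial * Real.Gamma (α + k + 1)) := by
  set c : ℝ := x - a with hcdef
  have hc : 0 < c := by simp [hcdef]; linarith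
  set term : ℕ → ℝ := fun n =>
    ((-1 : ℝ) ^ n * (2 * n).factorial / (2 ^ n * n.factorial)) *
      ∑ k ∈ Finset.range (2 * n + 1),
        a ^ (2 * n - k) * c ^ k / ((2 * n - k).factorial * Real.Gamma (α + k + 1))
    with hterm_def
  set F : ℕ → ℝ → ℝ := fun n s =>
    ((-1 : ℝ) ^ n / (2 ^ n * n.factorial)) * ((c - s) ^ (α - 1) * (s + a) ^ (2 * n))
    with hF_def
  have hGpos : 0 < Real.Gamma α := Real.Gamma_pos_of_pos hα
  have hcα : (0:ℝ) < c ^ α := Real.rpow_pos_of_pos hc α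
  -- integrability
  have hii : ∀ n : ℕ, IntervalIntegrable (fun s => F n s) volume 0 c := by
    intro n
    exact (((integ1 α c hα).mul_continuousOn (by fun_prop)).const_mul _)
  have hInt : ∀ n : ℕ, IntegrableOn (F n) (Set.Ioc 0 c) volume := by
    intro n
    exact (intervalIntegrable_iff_integrableOn_Ioc_of_le hc.le).mp (hii n)
  -- value of each integral
  have hIval : ∀ n : ℕ, ∫ s in Set.Ioc 0 c, F n s = (Real.Gamma α * c ^ α) * term n := by
    intro n
    rw [← intervalIntegral.integral_of_le hc.le]
    simp only [hF_def]
    rw [intervalIntegral.integral_const_mul, int_n α hα a c hc n, hterm_def]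
    ring
  -- summability of norms of integrals
  set M : ℝ := |a| + |x| with hM
  have hM0 : 0 ≤ M := by positivity
  set K : ℝ := ∫ s in Set.Ioc 0 c, (c - s) ^ (α - 1) with hK
  have hKint : IntegrableOn (fun s => (c - s) ^ (α - 1)) (Set.Ioc 0 c) volume :=
    (intervalIntegrable_iff_integrableOn_Ioc_of_le hc.le).mp (integ1 α c hα)
  have hbound : ∀ n : ℕ, (∫ s in Set.Ioc 0 c, ‖F n s‖) ≤
      (M ^ 2 / 2) ^ n / n.factorial * K := by
    intro n
    have h1 : ∀ s ∈ Set.Ioc (0:ℝ) c, ‖F n s‖ ≤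
        ((M ^ 2 / 2) ^ n / n.factorial) * (c - s) ^ (α - 1) := by
      intro s hs
      have hcs : (0:ℝ) ≤ (c - s) ^ (α - 1) := Real.rpow_nonneg (by linarith [hs.2]) _
      have habs : |s + a| ≤ M := by
        rw [abs_le]; constructor
        · have := neg_abs_le a; linarith [hs.1, abs_nonneg x]
        · have h2 : s + a ≤ x := by simp only [hcdef] at hs; linarith [hs.2]
          have := le_abs_self x; linarith [abs_nonneg a]
      have hpow : (s + a) ^ (2 * n) ≤ M ^ (2 * n) := by
        calc (s + a) ^ (2 * n) ≤ |s + a| ^ (2 * n) := by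
              rw [← abs_pow]; exact le_abs_self _
          _ ≤ M ^ (2 * n) := pow_le_pow_left₀ (abs_nonneg _) habs _
      have hpownn : (0:ℝ) ≤ (s + a) ^ (2 * n) := by rw [pow_mul]; positivity
      have h2n : (0:ℝ) < 2 ^ n * (n.factorial : ℝ) := by positivity
      have e1 : |((-1:ℝ)) ^ n / (2 ^ n * n.factorial)| = 1 / (2 ^ n * n.factorial) := by
        rw [abs_div, abs_pow, abs_neg, abs_one, one_pow, abs_of_pos h2n]
      have : ‖F n s‖ = (1 / (2 ^ n * n.factorial)) * ((c - s) ^ (α - 1) * (s + a) ^ (2 * n)) := by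
        simp only [hF_def]
        rw [Real.norm_eq_abs, abs_mul, e1, abs_of_nonneg (mul_nonneg hcs hpownn)]
      rw [this]
      have he : (M ^ 2 / 2) ^ n / n.factorial = (1 / (2 ^ n * n.factorial)) * M ^ (2 * n) := by
        rw [div_pow, pow_mul]; field_simp
      rw [he]
      calc (1 / (2 ^ n * (n.factorial:ℝ))) * ((c - s) ^ (α - 1) * (s + a) ^ (2 * n))
          ≤ (1 / (2 ^ n * (n.factorial:ℝ))) * ((c - s) ^ (α - 1) * M ^ (2 * n)) := by
            apply mul_le_mul_of_nonneg_left _ (by positivity)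
            exact mul_le_mul_of_nonneg_left hpow hcs
        _ = (1 / (2 ^ n * (n.factorial:ℝ))) * M ^ (2 * n) * (c - s) ^ (α - 1) := by ring
    calc (∫ s in Set.Ioc 0 c, ‖F n s‖)
        ≤ ∫ s in Set.Ioc 0 c, ((M ^ 2 / 2) ^ n / n.factorial) * (c - s) ^ (α - 1) := by
          refine integral_mono_ae (hInt n).norm (hKint.const_mul _) ?_
          exact (ae_restrict_iff' measurableSet_Ioc).mpr (Filter.Eventually.of_forall h1)
      _ = (M ^ 2 / 2) ^ n / n.factorial * K := by
          rw [hK, MeasureTheory.integral_const_mul]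
  have hSumNorm : Summable (fun n : ℕ => ∫ s in Set.Ioc 0 c, ‖F n s‖) := by
    refine Summable.of_nonneg_of_le (fun n => integral_nonneg fun s => norm_nonneg _)
      hbound ?_
    exact (Real.summable_pow_div_factorial (M ^ 2 / 2)).mul_right K
  -- pointwise sum
  have hpt : ∀ s : ℝ, ∑' n, F n s = (c - s) ^ (α - 1) * Real.exp (-(s + a) ^ 2 / 2) := by
    intro s
    have h1 : ∀ n : ℕ, F n s = ((c - s) ^ (α - 1)) * ((-(s + a) ^ 2 / 2) ^ n / n.factorial) := by
      intro n
      simp only [hF_def]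
      rw [show (-(s + a) ^ 2 / 2 : ℝ) = (-1) * ((s + a) ^ 2 / 2) by ring, mul_pow,
        div_pow, pow_mul]
      ring
    simp_rw [h1]
    rw [tsum_mul_left]
    congr 1
    rw [Real.exp_eq_exp_ℝ, NormedSpace.exp_eq_tsum_div]
  -- main HasSum
  have hHS := MeasureTheory.hasSum_integral_of_summable_integral_norm hInt hSumNorm
  have hIeq : ∫ s in Set.Ioc 0 c, (∑' n, F n s) =
      ∫ τ in a..x, (x - τ) ^ (α - 1) * Real.exp (-τ ^ 2 / 2) := by
    have h2 : ∫ τ in a..x, (x - τ) ^ (α - 1) * Real.exp (-τ ^ 2 / 2) =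
        ∫ s in (0:ℝ)..c, (c - s) ^ (α - 1) * Real.exp (-(s + a) ^ 2 / 2) := by
      have := intervalIntegral.integral_comp_add_right (a := (0:ℝ)) (b := c)
        (fun τ => (x - τ) ^ (α - 1) * Real.exp (-τ ^ 2 / 2)) a
      rw [zero_add, hcdef, sub_add_cancel] at this
      rw [← this]
      refine intervalIntegral.integral_congr fun s hs => ?_
      have : x - (s + a) = c - s := by rw [hcdef]; ring
      rw [this]
    rw [h2, intervalIntegral.integral_of_le hc.le]
    exact setIntegral_congr_fun measurableSet_Ioc fun s _ => hpt s
  rw [hIeq] at hHS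
  simp_rw [hIval] at hHS
  -- conclude
  set I : ℝ := ∫ τ in a..x, (x - τ) ^ (α - 1) * Real.exp (-τ ^ 2 / 2) with hI
  have hne : Real.Gamma α * c ^ α ≠ 0 := by positivity
  have hHS2 : HasSum term (I / (Real.Gamma α * c ^ α)) := by
    have := hHS.div_const (Real.Gamma α * c ^ α)
    simpa [mul_div_assoc, mul_div_cancel_left₀ _ hne] using this
  refine ⟨hHS2.summable, ?_⟩
  rw [hHS2.tsum_eq]
  field_simp
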